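/- Let B ≥ 1 be an integer, γ > 0 and R ∈ ℝ. Let F : ℝ → ℝ be concave on [0, ∞), nondecreasing on [0, ∞), with F(0) = 0, and let C_o ≥ 0 satisfy F(γ · C_o) = B · R. Then every α : Fin B → ℝ with (1/B) ∑_{b=1}^B F(γ α_b²) < R satisfies ∑_b α_b² < C_o. -/

import Mathlib

open Finset

lemma concave_subadd {F : ℝ → ℝ} (hFconc : ConcaveOn ℝ (Set.Ici 0) F)
    (hF0 : F 0 = 0) {x y : ℝ} (hx : 0 ≤ x) (hy : 0 ≤ y) :
    F (x + y) ≤ F x + F y := by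
  rcases eq_or_lt_of_le (add_nonneg hx hy) with h | h
  · have hx0 : x = 0 := by linarith [hx, hy]
    have hy0 : y = 0 := by linarith
    simp [hx0, hy0, hF0]
  · have hs : (0:ℝ) < x + y := h
    have h1 := hFconc.2 (Set.mem_Ici.2 (le_of_lt hs)) (Set.mem_Ici.2 le_rfl)
      (div_nonneg hx hs.le) (div_nonneg hy hs.le) (by field_simp)
    -- F (x/(x+y) • (x+y) + y/(x+y) • 0) ≥ ...
    have hxeq : (x / (x + y)) • (x + y) + (y / (x + y)) • (0:ℝ) = x := by
      rw [smul_eq_mul, smul_eq_mul, mul_zero, add_zero, div_mul_cancel₀ _ hs.ne']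
    rw [hxeq] at h1
    have h2 := hFconc.2 (Set.mem_Ici.2 (le_of_lt hs)) (Set.mem_Ici.2 le_rfl)
      (div_nonneg hy hs.le) (div_nonneg hx hs.le) (by field_simp; ring)
    have hyeq : (y / (x + y)) • (x + y) + (x / (x + y)) • (0:ℝ) = y := by
      rw [smul_eq_mul, smul_eq_mul, mul_zero, add_zero, div_mul_cancel₀ _ hs.ne']
    rw [hyeq] at h2
    simp only [smul_eq_mul, hF0, mul_zero, add_zero] at h1 h2
    have : x / (x + y) * F (x + y) + y / (x + y) * F (x + y) = F (x + y) := by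
      field_simp
    linarith

lemma concave_sum_le {F : ℝ → ℝ} (hFconc : ConcaveOn ℝ (Set.Ici 0) F)
    (hF0 : F 0 = 0) {n : ℕ} (x : Fin n → ℝ) (hx : ∀ i, 0 ≤ x i) :
    F (∑ i, x i) ≤ ∑ i, F (x i) := by
  induction n with
  | zero => simp [hF0]
  | succ m ih =>
    rw [Fin.sum_univ_succ, Fin.sum_univ_succ]
    calc F (x 0 + ∑ i : Fin m, x i.succ)
        ≤ F (x 0) + F (∑ i : Fin m, x i.succ) :=
          concave_subadd hFconc hF0 (hx 0)
            (Finset.sum_nonneg fun i _ => hx i.succ)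
      _ ≤ F (x 0) + ∑ i : Fin m, F (x i.succ) := by
          have := ih (fun i => x i.succ) (fun i => hx i.succ)
          linarith

theorem stmt_4 (B : ℕ) (hB : 1 ≤ B) (γ : ℝ) (hγ : 0 < γ) (R : ℝ)
    (F : ℝ → ℝ) (hFconc : ConcaveOn ℝ (Set.Ici 0) F)
    (hFmono : MonotoneOn F (Set.Ici 0)) (hF0 : F 0 = 0)
    (Co : ℝ) (hCo : 0 ≤ Co) (hFCo : F (γ * Co) = B * R)
    (α : Fin B → ℝ) (hα : (1 / B) * ∑ b, F (γ * (α b) ^ 2) < R) :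
    ∑ b, (α b) ^ 2 < Co := by
  by_contra hS
  push_neg at hS
  set S := ∑ b, (α b) ^ 2 with hSdef
  have hBpos : (0:ℝ) < B := by exact_mod_cast hB
  have hsum : ∑ b, F (γ * (α b) ^ 2) < B * R := by
    rw [one_div, inv_mul_lt_iff₀ hBpos] at hα
    linarith
  have hSnn : 0 ≤ S := Finset.sum_nonneg fun b _ => sq_nonneg _
  have h1 : F (γ * S) ≤ ∑ b, F (γ * (α b) ^ 2) := by
    have := concave_sum_le hFconc hF0 (fun b => γ * (α b) ^ 2)
      (fun b => mul_nonneg hγ.le (sq_nonneg _))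
    rwa [← Finset.mul_sum] at this
  have h2 : F (γ * Co) ≤ F (γ * S) :=
    hFmono (Set.mem_Ici.2 (mul_nonneg hγ.le hCo))
      (Set.mem_Ici.2 (mul_nonneg hγ.le hSnn))
      (mul_le_mul_of_nonneg_left hS hγ.le)
  rw [hFCo] at h2
  linarith
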